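/- Let R be a local ring whose Jacobson radical is right T-nilpotent (i.e. R is a local right perfect ring). Then every right R-module is regularly weakly based. -/

import Mathlib

/-- A weak basis of a module: a weakly independent generating set. -/
def IsWeakBasis (R : Type*) [Semiring R] {M : Type*} [AddCommMonoid M]
    [Module R M] (X : Set M) : Prop :=
  (∀ x ∈ X, x ∉ Submodule.span R (X \ {x})) ∧ Submodule.span R X = ⊤

/-- A module is regularly weakly based if every generating set contains a weak basis. -/
def RegularlyWeaklyBased (R : Type*) [Semiring R] (M : Type*) [AddCommMonoid M]
    [Module R M] : Prop :=
  ∀ X : Set M, Submodule.span R X = ⊤ → ∃ W ⊆ X, IsWeakBasis R W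

/-- `tProd a n = a n * a (n-1) * ⋯ * a 1` (and `1` for `n = 0`). -/
def tProd {R : Type*} [Ring R] (a : ℕ → R) : ℕ → R
  | 0 => 1
  | n + 1 => a (n + 1) * tProd a n

/-- A set `S ⊆ R` is right T-nilpotent if for every sequence `a₁, a₂, …` of elements
of `S` there is `n ≥ 1` with `aₙ ⋯ a₂ a₁ = 0`. -/
def IsRightTNilpotent {R : Type*} [Ring R] (S : Set R) : Prop :=
  ∀ a : ℕ → R, (∀ n, 1 ≤ n → a n ∈ S) → ∃ n, 1 ≤ n ∧ tProd a n = 0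

open MulOpposite Submodule

section LocalFacts

variable {R : Type*} [Ring R] [IsLocalRing R]

/-- In a (possibly noncommutative) local ring, a left-invertible element is a unit. -/
lemma aux_isUnit_of_mul_eq_one {s r : R} (h : s * r = 1) : IsUnit r := by
  rcases IsLocalRing.isUnit_or_isUnit_of_add_one (a := r * s) (b := 1 - r * s) (by abel) with
    hu | hu
  · obtain ⟨x, hx1, hx2⟩ := isUnit_iff_exists.mp hu
    have h1 : r * s = 1 := by
      calc r * s = r * s * (r * s * x) := by rw [hx1, mul_one]
      _ = r * (s * r) * (s * x) := by noncomm_ring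
      _ = r * (s * x) := by rw [h, mul_one]
      _ = r * s * x := by rw [mul_assoc]
      _ = 1 := hx1
    exact ⟨⟨r, s, h1, h⟩, rfl⟩
  · obtain ⟨x, hx1, hx2⟩ := isUnit_iff_exists.mp hu
    have hr0 : r = 0 := by
      have h0 : (1 - r * s) * r = 0 := by
        have : r * (s * r) = r * 1 := by rw [h]
        rw [sub_mul, one_mul, mul_assoc, this, mul_one, sub_self]
      calc r = x * ((1 - r * s) * r) := by rw [← mul_assoc, hx2, one_mul]
      _ = 0 := by rw [h0, mul_zero]
    exfalso
    apply one_ne_zero (α := R)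
    rw [← h, hr0, mul_zero]

/-- In a local ring every nonunit lies in the Jacobson radical. -/
lemma aux_mem_jacobson_of_not_isUnit {r : R} (h : ¬ IsUnit r) :
    r ∈ TwoSidedIdeal.jacobson (⊥ : TwoSidedIdeal R) := by
  rw [TwoSidedIdeal.mem_jacobson_iff]
  intro y
  have hyr : ¬ IsUnit (y * r) := by
    intro hu
    obtain ⟨x, _, hx2⟩ := isUnit_iff_exists.mp hu
    exact h (aux_isUnit_of_mul_eq_one (s := x * y) (by rw [mul_assoc]; exact hx2))
  have hunit : IsUnit (y * r + 1) := by
    rcases IsLocalRing.isUnit_or_isUnit_of_add_one (a := y * r + 1) (b := -(y * r)) (by rw [add_right_comm, add_neg_cancel, zero_add]) with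
      h' | h'
    · exact h'
    · exact absurd (by simpa using h'.neg) hyr
  obtain ⟨u, hu⟩ := hunit
  refine ⟨(↑u⁻¹ : R), ?_⟩
  rw [TwoSidedIdeal.mem_bot]
  have huv : (↑u⁻¹ : R) * (y * r + 1) = 1 := by rw [← hu]; exact u.inv_mul
  calc (↑u⁻¹ : R) * y * r + ↑u⁻¹ - 1 = ↑u⁻¹ * (y * r + 1) - 1 := by noncomm_ring
  _ = 0 := by rw [huv, sub_self]

end LocalFacts

section Superfluous

variable {R : Type*} [Ring R] {M : Type*} [AddCommGroup M] [Module Rᵐᵒᵖ M]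

/-- The set of "multiples by elements of `S`" in a right `R`-module. -/
def auxT (S : Set R) (M : Type*) [AddCommGroup M] [Module Rᵐᵒᵖ M] : Set M :=
  {x : M | ∃ a ∈ S, ∃ m : M, (op a) • m = x}

lemma aux_span_le_closure (S : Set R) (hSmul : ∀ a ∈ S, ∀ r : R, a * r ∈ S) :
    (span Rᵐᵒᵖ (auxT S M) : Set M) ⊆ (AddSubgroup.closure (auxT S M) : Set M) := by
  intro x hx
  induction hx using span_induction with
  | mem t ht => exact AddSubgroup.subset_closure ht
  | zero => exact zero_mem _
  | add y z _ _ hy hz => exact add_mem hy hz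
  | smul a y hy' hy =>
      clear hy'
      induction hy using AddSubgroup.closure_induction with
      | mem t ht =>
          obtain ⟨b, hb, m, rfl⟩ := ht
          refine AddSubgroup.subset_closure ⟨b * unop a, hSmul b hb _, m, ?_⟩
          rw [op_mul, op_unop, ← smul_smul]
      | zero => rw [smul_zero]; exact zero_mem _
      | add y z _ _ hy hz => rw [smul_add]; exact add_mem hy hz
      | neg y _ hy => rw [smul_neg]; exact neg_mem hy

/-- Nakayama/superfluity for right T-nilpotent sets: if `N + M·S = M` then `N = M`. -/
lemma aux_superfluous (S : Set R) (hSmul : ∀ a ∈ S, ∀ r : R, a * r ∈ S)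
    (hTnil : IsRightTNilpotent S) (N : Submodule Rᵐᵒᵖ M)
    (h : ∀ x : M, x ∈ N ⊔ span Rᵐᵒᵖ (auxT S M)) : N = ⊤ := by
  classical
  by_contra hN
  obtain ⟨x₀, hx₀⟩ := not_forall.mp fun hall => hN (Submodule.eq_top_iff'.mpr hall)
  -- key step
  have step : ∀ (P : R) (x : M), (op P) • x ∉ N → ∃ b ∈ S, ∃ y : M, (op (b * P)) • y ∉ N := by
    intro P x hPx
    by_contra hcon
    push_neg at hcon
    apply hPx
    obtain ⟨n, hn, t, ht, rfl⟩ := Submodule.mem_sup.mp (h x)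
    rw [smul_add]
    refine N.add_mem (N.smul_mem _ hn) ?_
    have ht' := aux_span_le_closure S hSmul ht
    clear ht hPx
    induction ht' using AddSubgroup.closure_induction with
    | mem u hu =>
        obtain ⟨b, hb, m, rfl⟩ := hu
        rw [smul_smul, ← op_mul]
        exact hcon b hb m
    | zero => rw [smul_zero]; exact N.zero_mem
    | add y z _ _ hy hz => rw [smul_add]; exact N.add_mem hy hz
    | neg y _ hy => rw [smul_neg]; exact N.neg_mem hy
  -- build the sequence by recursion with choice
  let Q := {p : R × M // (op p.1) • p.2 ∉ N}
  have step' : ∀ p : Q, ∃ q : R × Q, q.1 ∈ S ∧ (q.2 : { p : R × M // (op p.1) • p.2 ∉ N}).1.1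
      = q.1 * (p : { p : R × M // (op p.1) • p.2 ∉ N}).1.1 := by
    rintro ⟨⟨P, x⟩, hp⟩
    obtain ⟨b, hbS, y, hy⟩ := step P x hp
    exact ⟨(b, ⟨(b * P, y), hy⟩), hbS, rfl⟩
  choose F hF1 hF2 using step'
  have hq0 : (op (1 : R)) • x₀ ∉ N := by simpa using hx₀
  let g : ℕ → Q := fun n => Nat.rec (⟨(1, x₀), hq0⟩ : Q) (fun _ p => (F p).2) n
  let a : ℕ → R := fun n => Nat.rec (1 : R) (fun k _ => (F (g k)).1) n
  have hg_succ : ∀ n, g (n + 1) = (F (g n)).2 := fun n => rfl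
  have ha_succ : ∀ n, a (n + 1) = (F (g n)).1 := fun n => rfl
  have hga : ∀ n, (g n).1.1 = tProd a n := by
    intro n
    induction n with
    | zero => rfl
    | succ n ih =>
        rw [hg_succ, hF2, ih]
        simp only [tProd]
        rw [ha_succ]
  have haS : ∀ n, 1 ≤ n → a n ∈ S := by
    intro n hn
    match n, hn with
    | n + 1, _ => rw [ha_succ]; exact hF1 (g n)
  obtain ⟨n, hn1, hn0⟩ := hTnil a haS
  have := (g n).2
  rw [hga, hn0] at this
  simp at this

end Superfluous

/-- Every right module (i.e. `Rᵐᵒᵖ`-module) over a local right perfect ring (a local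
ring whose Jacobson radical is right T-nilpotent) is regularly weakly based. -/
theorem regularlyWeaklyBased_of_isLocalRing_rightPerfect
    (R : Type*) [Ring R] [IsLocalRing R]
    (hTnil : IsRightTNilpotent ((TwoSidedIdeal.jacobson (⊥ : TwoSidedIdeal R) : TwoSidedIdeal R) : Set R))
    (M : Type*) [AddCommGroup M] [Module Rᵐᵒᵖ M] :
    RegularlyWeaklyBased Rᵐᵒᵖ M := by
  classical
  intro X hX
  set S : Set R := ((TwoSidedIdeal.jacobson (⊥ : TwoSidedIdeal R) : TwoSidedIdeal R) : Set R)
    with hSdef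
  have hSmul : ∀ a ∈ S, ∀ r : R, a * r ∈ S := fun a ha r =>
    (TwoSidedIdeal.jacobson (⊥ : TwoSidedIdeal R)).mul_mem_right a r ha
  set MJ : Submodule Rᵐᵒᵖ M := span Rᵐᵒᵖ (auxT S M) with hMJdef
  set 𝒮 : Set (Set M) := {W | W ⊆ X ∧ ∀ w ∈ W, w ∉ span Rᵐᵒᵖ (W \ {w}) ⊔ MJ} with h𝒮def
  -- Zorn's lemma
  have hchains : ∀ c ⊆ 𝒮, IsChain (· ⊆ ·) c → ∃ ub ∈ 𝒮, ∀ s ∈ c, s ⊆ ub := by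
    intro c hc𝒮 hchain
    rcases Set.eq_empty_or_nonempty c with rfl | hcne
    · exact ⟨∅, ⟨Set.empty_subset X, fun w hw => absurd hw (Set.notMem_empty w)⟩,
        fun s hs => absurd hs (Set.notMem_empty s)⟩
    refine ⟨⋃₀ c, ⟨Set.sUnion_subset fun W' hW' => (hc𝒮 hW').1, ?_⟩,
      fun s hs => Set.subset_sUnion_of_mem hs⟩
    intro w hw hmem
    obtain ⟨W₁, hW₁c, hwW₁⟩ := hw
    -- rewrite the sup as a span of a union, extract a finite subset
    rw [← span_union] at hmem
    obtain ⟨F, hFsub, hwF⟩ := mem_span_finite_of_mem_span hmem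
    -- the part of F in ⋃₀ c \ {w}, together with w, lies in one member of the chain
    have hdir : DirectedOn (fun i j : Set M => i ⊆ j) c := hchain.directedOn
    set F₁ : Finset M := F.filter (fun z => z ∈ ⋃₀ c \ {w}) with hF₁def
    have hsub : ((insert w F₁ : Finset M) : Set M) ⊆ ⋃ i ∈ c, (fun i : Set M => i) i := by
      intro z hz
      rcases Finset.mem_insert.mp (by exact_mod_cast hz) with rfl | hz'
      · exact Set.mem_biUnion hW₁c hwW₁
      · obtain ⟨Wz, hWz, hzW⟩ := ((Finset.mem_filter.mp hz').2).1
        exact Set.mem_biUnion hWz hzW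
    obtain ⟨W₂, hW₂c, hFW₂⟩ :=
      DirectedOn.exists_mem_subset_of_finset_subset_biUnion (f := fun i : Set M => i)
        hcne hdir hsub
    have hwW₂ : w ∈ W₂ := hFW₂ (by exact_mod_cast Finset.mem_insert_self w F₁)
    have hF' : (F : Set M) ⊆ (W₂ \ {w}) ∪ auxT S M := by
      intro z hz
      rcases hFsub hz with hz1 | hz2
      · left
        refine ⟨hFW₂ ?_, hz1.2⟩
        exact_mod_cast Finset.mem_insert_of_mem (Finset.mem_filter.mpr ⟨hz, hz1⟩)
      · right; exact hz2
    have : w ∈ span Rᵐᵒᵖ (W₂ \ {w}) ⊔ MJ := by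
      rw [← span_union]
      exact span_mono hF' hwF
    exact (hc𝒮 hW₂c).2 w hwW₂ this
  obtain ⟨W, hWmax⟩ := zorn_subset 𝒮 hchains
  obtain ⟨hWX, hWind⟩ := hWmax.1
  -- span W together with MJ is everything
  have hgen : span Rᵐᵒᵖ W ⊔ MJ = ⊤ := by
    rw [eq_top_iff, ← hX, span_le]
    intro x hxX
    by_contra hx
    have hxW : x ∉ W := fun hmem =>
      hx (le_sup_left (α := Submodule Rᵐᵒᵖ M) (subset_span hmem))
    have hins : insert x W ∈ 𝒮 := by
      refine ⟨Set.insert_subset hxX hWX, ?_⟩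
      intro w hw hmem
      rcases eq_or_ne w x with rfl | hne
      · rw [Set.insert_diff_self_of_notMem hxW] at hmem
        exact hx hmem
      · have hwW : w ∈ W := hw.resolve_left hne
        rw [Set.insert_diff_of_notMem _ (by simpa using hne.symm)] at hmem
        obtain ⟨s, hs, t, ht, hst⟩ := Submodule.mem_sup.mp hmem
        obtain ⟨r, z, hz, rfl⟩ := Submodule.mem_span_insert.mp hs
        by_cases hr : IsUnit (unop r)
        · -- exchange: then x ∈ span W ⊔ MJ, contradiction
          apply hx
          obtain ⟨u, hu⟩ := (isUnit_op (m := unop r)).mpr hr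
          rw [op_unop] at hu
          have hwzt : w - z - t = r • x := by rw [← hst]; abel
          have hx' : x = (↑u⁻¹ : Rᵐᵒᵖ) • (w - z - t) := by
            rw [hwzt, ← hu, smul_smul, u.inv_mul, one_smul]
          rw [hx']
          refine Submodule.smul_mem _ _ (Submodule.sub_mem _ (Submodule.sub_mem _ ?_ ?_) ?_)
          · exact le_sup_left (α := Submodule Rᵐᵒᵖ M) (subset_span hwW)
          · exact le_sup_left (α := Submodule Rᵐᵒᵖ M)
              (span_mono (Set.diff_subset) hz)
          · exact le_sup_right (α := Submodule Rᵐᵒᵖ M) ht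
        · -- r is a nonunit, so r • x ∈ MJ and w ∈ span (W \ {w}) ⊔ MJ
          have hrx : r • x ∈ MJ := by
            apply subset_span
            exact ⟨unop r, aux_mem_jacobson_of_not_isUnit hr, x, by rw [op_unop]⟩
          have heq : z + (r • x + t) = w := by rw [← hst]; abel
          have hmem2 : z + (r • x + t) ∈ span Rᵐᵒᵖ (W \ {w}) ⊔ MJ :=
            Submodule.add_mem _ (le_sup_left (α := Submodule Rᵐᵒᵖ M) hz)
              (le_sup_right (α := Submodule Rᵐᵒᵖ M) (MJ.add_mem hrx ht))
          rw [heq] at hmem2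
          exact hWind w hwW hmem2
    have := hWmax.2 hins (Set.subset_insert x W)
    exact hxW (this (Set.mem_insert x W))
  -- MJ is superfluous, so W generates
  have hspan : span Rᵐᵒᵖ W = ⊤ := by
    refine aux_superfluous S hSmul hTnil (span Rᵐᵒᵖ W) ?_
    intro x
    rw [← hMJdef, hgen]
    trivial
  refine ⟨W, hWX, ?_, hspan⟩
  intro w hw hmem
  exact hWind w hw (le_sup_left (α := Submodule Rᵐᵒᵖ M) hmem)
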